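/- (Asymptotic expansion of the exponent function near the axis.) Let H be a nonnegative Borel measure on the open interval (0,1) with density h with respect to Lebesgue measure, satisfying the moment constraints ∫₀¹ w h(w) dw = ∫₀¹ (1−w) h(w) dw = 1. Suppose there exist u > 0 and v > −1 such that h(w)/(u(1−w)^v) → 1 as w → 1⁻. Define V(x,y) = ∫₀¹ max{w/x, (1−w)/y} h(w) dw for x, y > 0. Then (V(1/β, 1) − 1) / β^{v+2} → u / ((v+1)(v+2)) as β → 0⁺. -/

import Mathlib

open MeasureTheory Filter

/-- asymptotic expansion of the exponent function near the axis: if the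
spectral density `h` on `(0,1)` satisfies the moment constraints
`∫₀¹ w h(w) dw = ∫₀¹ (1-w) h(w) dw = 1` and `h(w) ~ u(1-w)^v` as `w → 1⁻`, then for
`V(x,y) = ∫₀¹ max{w/x, (1-w)/y} h(w) dw` one has
`(V(1/β, 1) − 1)/β^{v+2} → u/((v+1)(v+2))` as `β → 0⁺`. -/
lemma aux_int_pow {v : ℝ} (hv : -1 < v) :
    IntegrableOn (fun w : ℝ => (1 - w) ^ v) (Set.Ioo (0:ℝ) 1) := by
  have h1 : IntervalIntegrable (fun s : ℝ => s ^ v) volume 0 1 :=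
    intervalIntegral.intervalIntegrable_rpow' hv
  have h2 := (h1.comp_sub_left 1).symm
  simp only [sub_zero, sub_self] at h2
  have h3 : IntegrableOn (fun w : ℝ => (1 - w) ^ v) (Set.Ioc (0:ℝ) 1) := by
    simpa [intervalIntegrable_iff_integrableOn_Ioc_of_le (by norm_num : (0:ℝ) ≤ 1)] using h2
  exact h3.mono_set Set.Ioo_subset_Ioc_self

lemma aux_meas_pow (v : ℝ) : Measurable (fun w : ℝ => (1 - w) ^ v) := by
  exact (measurable_const.sub measurable_id).pow measurable_const

lemma aux_int_max {v : ℝ} (hv : -1 < v) {β : ℝ} (hβ : 0 < β) :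
    IntegrableOn (fun w : ℝ => max ((1+β)*w-1) 0 * (1-w)^v) (Set.Ioo (0:ℝ) 1) := by
  apply Integrable.mono' ((aux_int_pow hv).const_mul β)
  · exact ((((measurable_const.mul measurable_id).sub measurable_const).max
      measurable_const).mul ((measurable_const.sub measurable_id).pow
      measurable_const)).aestronglyMeasurable
  · rw [ae_restrict_iff' measurableSet_Ioo]
    refine Filter.Eventually.of_forall fun w hw => ?_
    have hpow : 0 ≤ (1-w)^v := Real.rpow_nonneg (by linarith [hw.2]) v
    have h1 : max ((1+β)*w-1) 0 ≤ β := max_le (by nlinarith [hw.2, hw.1]) hβ.le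
    rw [Real.norm_eq_abs, abs_of_nonneg (mul_nonneg (le_max_right _ _) hpow)]
    exact mul_le_mul_of_nonneg_right h1 hpow

lemma aux_I {v : ℝ} (hv : -1 < v) {β : ℝ} (hβ : 0 < β) :
    ∫ w in Set.Ioo (0:ℝ) 1, max ((1+β)*w-1) 0 * (1-w)^v
      = β^(v+2) / ((1+β)^(v+1) * ((v+1)*(v+2))) := by
  have hv1 : (0:ℝ) < v + 1 := by linarith
  have hv2 : (0:ℝ) < v + 2 := by linarith
  have h1β : (0:ℝ) < 1 + β := by linarith
  set c : ℝ := 1/(1+β) with hc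
  have hc0 : 0 < c := by positivity
  have hc1 : c < 1 := by rw [hc, div_lt_one h1β]; linarith
  have hcc : (1+β)*c = 1 := by rw [hc]; field_simp
  set f : ℝ → ℝ := fun w => max ((1+β)*w-1) 0 * (1-w)^v with hf
  have hfIoc : IntegrableOn f (Set.Ioc (0:ℝ) 1) := by
    rw [integrableOn_Ioc_iff_integrableOn_Ioo]
    exact aux_int_max hv hβ
  have I1 : IntervalIntegrable f volume 0 c :=
    (intervalIntegrable_iff_integrableOn_Ioc_of_le hc0.le).mpr
      (hfIoc.mono_set (Set.Ioc_subset_Ioc le_rfl hc1.le))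
  have I2 : IntervalIntegrable f volume c 1 :=
    (intervalIntegrable_iff_integrableOn_Ioc_of_le hc1.le).mpr
      (hfIoc.mono_set (Set.Ioc_subset_Ioc hc0.le le_rfl))
  have hIoo : ∫ w in Set.Ioo (0:ℝ) 1, f w = ∫ w in (0:ℝ)..1, f w := by
    rw [intervalIntegral.integral_of_le (by norm_num : (0:ℝ) ≤ 1),
      MeasureTheory.integral_Ioc_eq_integral_Ioo]
  have hsplit : ∫ w in (0:ℝ)..1, f w = (∫ w in (0:ℝ)..c, f w) + ∫ w in c..1, f w :=
    (intervalIntegral.integral_add_adjacent_intervals I1 I2).symm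
  have hzero : ∫ w in (0:ℝ)..c, f w = 0 := by
    have heq : Set.EqOn f (fun _ => (0:ℝ)) (Set.uIcc 0 c) := by
      intro w hw
      rw [Set.uIcc_of_le hc0.le] at hw
      have hle : (1+β)*w - 1 ≤ 0 := by nlinarith [hw.1, hw.2]
      simp [hf, max_eq_right hle]
    rw [intervalIntegral.integral_congr heq, intervalIntegral.integral_zero]
  set m : ℝ := 1 - c with hm
  have hm0 : 0 < m := by simp [hm]; linarith
  have hm1 : m = β/(1+β) := by rw [hm, hc]; field_simp; ring
  have hmain : ∫ w in c..1, f w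
      = β * (m^(v+1)/(v+1)) - (1+β)*(m^(v+2)/(v+2)) := by
    have heq2 : Set.EqOn f (fun w => (fun s => (β-(1+β)*s)*s^v) (1-w)) (Set.uIcc c 1) := by
      intro w hw
      rw [Set.uIcc_of_le hc1.le] at hw
      have hge : 0 ≤ (1+β)*w - 1 := by nlinarith [hw.1]
      simp only [hf, max_eq_left hge]
      congr 1
      ring
    rw [intervalIntegral.integral_congr heq2,
      intervalIntegral.integral_comp_sub_left (fun s => (β-(1+β)*s)*s^v) 1]
    have h11 : (1:ℝ) - 1 = 0 := by norm_num
    rw [h11, ← hm]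
    have heq3 : Set.EqOn (fun s : ℝ => (β-(1+β)*s)*s^v)
        (fun s : ℝ => β * s^v - (1+β)*s^(v+1)) (Set.uIcc 0 m) := by
      intro s hs
      rw [Set.uIcc_of_le hm0.le] at hs
      rcases eq_or_lt_of_le hs.1 with h0 | h0
      · simp [← h0, Real.zero_rpow hv1.ne']
      · simp only
        rw [show v+1 = v+1 from rfl, Real.rpow_add h0 v 1, Real.rpow_one]
        ring
    rw [intervalIntegral.integral_congr heq3,
      intervalIntegral.integral_sub
        ((intervalIntegral.intervalIntegrable_rpow' hv).const_mul β)
        ((intervalIntegral.intervalIntegrable_rpow' (by linarith : (-1:ℝ) < v+1)).const_mul (1+β)),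
      intervalIntegral.integral_const_mul, intervalIntegral.integral_const_mul,
      integral_rpow (Or.inl hv), integral_rpow (Or.inl (by linarith : (-1:ℝ) < v+1)),
      Real.zero_rpow hv1.ne', Real.zero_rpow (by linarith : v+1+1 ≠ 0),
      show v+1+1 = v+2 by ring]
    ring
  have hp2 : β^(v+2) = β^(v+1) * β := by
    rw [show v+2 = (v+1)+1 by ring, Real.rpow_add hβ, Real.rpow_one]
  have hq2 : (1+β)^(v+2) = (1+β)^(v+1) * (1+β) := by
    rw [show v+2 = (v+1)+1 by ring, Real.rpow_add h1β, Real.rpow_one]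
  have hmp : m^(v+1) = β^(v+1)/(1+β)^(v+1) := by
    rw [hm1, Real.div_rpow hβ.le h1β.le]
  have hmq : m^(v+2) = β^(v+2)/(1+β)^(v+2) := by
    rw [hm1, Real.div_rpow hβ.le h1β.le]
  have hqne : (1+β)^(v+1) ≠ 0 := (Real.rpow_pos_of_pos h1β _).ne'
  rw [hIoo, hsplit, hzero, hmain, zero_add, hmp, hmq, hq2, hp2]
  field_simp
  ring

theorem exponent_function_expansion_near_axis
    (h : ℝ → ℝ) (hmeas : Measurable h)
    (hnonneg : ∀ w ∈ Set.Ioo (0:ℝ) 1, 0 ≤ h w)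
    (hint1 : IntegrableOn (fun w => w * h w) (Set.Ioo (0:ℝ) 1))
    (hint2 : IntegrableOn (fun w => (1 - w) * h w) (Set.Ioo (0:ℝ) 1))
    (hm1 : ∫ w in Set.Ioo (0:ℝ) 1, w * h w = 1)
    (hm2 : ∫ w in Set.Ioo (0:ℝ) 1, (1 - w) * h w = 1)
    (u v : ℝ) (hu : 0 < u) (hv : -1 < v)
    (htail : Tendsto (fun w => h w / (u * (1 - w) ^ v))
      (nhdsWithin 1 (Set.Iio 1)) (nhds 1))
    (V : ℝ → ℝ → ℝ)
    (hV : ∀ x > (0:ℝ), ∀ y > (0:ℝ),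
      V x y = ∫ w in Set.Ioo (0:ℝ) 1, max (w / x) ((1 - w) / y) * h w) :
    Tendsto (fun β : ℝ => (V (1 / β) 1 - 1) / β ^ (v + 2))
      (nhdsWithin 0 (Set.Ioi 0)) (nhds (u / ((v + 1) * (v + 2)))) := by
  have hv1 : (0:ℝ) < v + 1 := by linarith
  have hv2 : (0:ℝ) < v + 2 := by linarith
  have hintF : ∀ β : ℝ, 0 < β →
      IntegrableOn (fun w => max ((1+β)*w-1) 0 * h w) (Set.Ioo (0:ℝ) 1) := by
    intro β hβ
    apply Integrable.mono' (hint1.const_mul (1+β))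
    · exact ((((measurable_const.mul measurable_id).sub measurable_const).max
        measurable_const).mul hmeas).aestronglyMeasurable
    · rw [ae_restrict_iff' measurableSet_Ioo]
      refine Filter.Eventually.of_forall fun w hw => ?_
      have hh := hnonneg w hw
      have hmx : max ((1+β)*w-1) 0 ≤ (1+β)*w :=
        max_le (by linarith) (by nlinarith [hw.1])
      rw [Real.norm_eq_abs, abs_of_nonneg (mul_nonneg (le_max_right _ _) hh)]
      calc max ((1+β)*w-1) 0 * h w ≤ ((1+β)*w) * h w :=
            mul_le_mul_of_nonneg_right hmx hh
        _ = (1+β)*(w*h w) := by ring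
  have hVF : ∀ β : ℝ, 0 < β →
      V (1/β) 1 - 1 = ∫ w in Set.Ioo (0:ℝ) 1, max ((1+β)*w-1) 0 * h w := by
    intro β hβ
    rw [hV (1/β) (by positivity) 1 one_pos]
    have hpt : ∀ w : ℝ, max (w / (1/β)) ((1 - w) / 1) * h w
        = (1 - w)*h w + max ((1+β)*w-1) 0 * h w := by
      intro w
      have hmax : max (w / (1/β)) ((1 - w) / 1) = (1 - w) + max ((1+β)*w-1) 0 := by
        rw [div_one, one_div, div_inv_eq_mul]
        rcases le_total (w*β) (1-w) with hcmp | hcmp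
        · rw [max_eq_right hcmp, max_eq_right (by nlinarith), add_zero]
        · rw [max_eq_left hcmp, max_eq_left (by nlinarith)]; ring
      rw [hmax]; ring
    simp only [hpt]
    rw [MeasureTheory.integral_add hint2 (hintF β hβ), hm2]
    ring
  have hLb_pos : ∀ β : ℝ, 0 < β → 0 < u / ((1+β)^(v+1) * ((v+1)*(v+2))) := by
    intro β hβ
    have hrp := Real.rpow_pos_of_pos (show (0:ℝ) < 1+β by linarith) (v+1)
    positivity
  have hLb_tendsto : Tendsto (fun β : ℝ => u / ((1+β)^(v+1) * ((v+1)*(v+2))))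
      (nhdsWithin 0 (Set.Ioi 0)) (nhds (u / ((v + 1) * (v + 2)))) := by
    have hca : ContinuousAt (fun β : ℝ => u / ((1+β)^(v+1) * ((v+1)*(v+2)))) 0 := by
      apply ContinuousAt.div continuousAt_const
      · exact (ContinuousAt.rpow_const
          ((continuous_const.add continuous_id).continuousAt)
          (Or.inl (by norm_num))).mul continuousAt_const
      · show (1+(0:ℝ))^(v+1) * ((v+1)*(v+2)) ≠ 0
        have h1 : (1+(0:ℝ))^(v+1) = 1 := by norm_num
        rw [h1, one_mul]
        exact (mul_pos hv1 hv2).ne'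
    have h0 : u / ((1+(0:ℝ))^(v+1) * ((v+1)*(v+2))) = u / ((v + 1) * (v + 2)) := by
      have h1 : (1+(0:ℝ))^(v+1) = 1 := by norm_num
      rw [h1, one_mul]
    exact tendsto_nhdsWithin_of_tendsto_nhds (h0 ▸ hca.tendsto)
  have key : ∀ ε : ℝ, 0 < ε →
      ∀ᶠ β in nhdsWithin (0:ℝ) (Set.Ioi 0),
        |((V (1/β) 1 - 1)/β^(v+2)) / (u / ((1+β)^(v+1) * ((v+1)*(v+2)))) - 1| ≤ ε := by
    intro ε hε
    rw [Metric.tendsto_nhdsWithin_nhds] at htail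
    obtain ⟨δ, hδ0, hδ⟩ := htail ε hε
    have hmem : Set.Ioo (0:ℝ) (min δ 1) ∈ nhdsWithin (0:ℝ) (Set.Ioi 0) :=
      Ioo_mem_nhdsGT (by positivity)
    filter_upwards [hmem] with β hβmem
    obtain ⟨hβ0, hβm⟩ := hβmem
    have hβδ : β < δ := lt_of_lt_of_le hβm (min_le_left _ _)
    have hβ1 : β < 1 := lt_of_lt_of_le hβm (min_le_right _ _)
    have h1β : (0:ℝ) < 1 + β := by linarith
    have hptw : ∀ w ∈ Set.Ioo (0:ℝ) 1,
        ((1-ε)*u) * (max ((1+β)*w-1) 0 * (1-w)^v) ≤ max ((1+β)*w-1) 0 * h w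
        ∧ max ((1+β)*w-1) 0 * h w ≤ ((1+ε)*u) * (max ((1+β)*w-1) 0 * (1-w)^v) := by
      intro w hw
      rcases le_or_gt ((1+β)*w) 1 with hcmp | hcmp
      · have hz : max ((1+β)*w-1) 0 = 0 := max_eq_right (by linarith)
        simp [hz]
      · have hwlb : 1 - β < w := by
          nlinarith [mul_pos hβ0 (sub_pos.mpr hw.2)]
        have hw1 : w < 1 := hw.2
        have hdist : dist w 1 < δ := by
          rw [Real.dist_eq, abs_of_nonpos (by linarith)]
          linarith
        have hh := hδ (Set.mem_Iio.mpr hw1) hdist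
        rw [Real.dist_eq] at hh
        have hP : 0 < u * (1-w)^v :=
          mul_pos hu (Real.rpow_pos_of_pos (by linarith) v)
        have habs := abs_lt.mp hh
        have hlow : (1-ε) * (u*(1-w)^v) ≤ h w := by
          have h1 : 1 - ε < h w / (u*(1-w)^v) := by linarith [habs.1]
          have := (lt_div_iff₀ hP).mp h1
          linarith
        have hhigh : h w ≤ (1+ε) * (u*(1-w)^v) := by
          have h1 : h w / (u*(1-w)^v) < 1 + ε := by linarith [habs.2]
          have := (div_lt_iff₀ hP).mp h1
          linarith
        have hmx0 : (0:ℝ) ≤ max ((1+β)*w-1) 0 := le_max_right _ _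
        constructor
        · calc ((1-ε)*u) * (max ((1+β)*w-1) 0 * (1-w)^v)
              = ((1-ε)*(u*(1-w)^v)) * max ((1+β)*w-1) 0 := by ring
            _ ≤ h w * max ((1+β)*w-1) 0 := mul_le_mul_of_nonneg_right hlow hmx0
            _ = max ((1+β)*w-1) 0 * h w := by ring
        · calc max ((1+β)*w-1) 0 * h w = h w * max ((1+β)*w-1) 0 := by ring
            _ ≤ ((1+ε)*(u*(1-w)^v)) * max ((1+β)*w-1) 0 :=
              mul_le_mul_of_nonneg_right hhigh hmx0
            _ = ((1+ε)*u) * (max ((1+β)*w-1) 0 * (1-w)^v) := by ring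
    have hIlow : ((1-ε)*u) * ∫ w in Set.Ioo (0:ℝ) 1, max ((1+β)*w-1) 0 * (1-w)^v
        ≤ ∫ w in Set.Ioo (0:ℝ) 1, max ((1+β)*w-1) 0 * h w := by
      rw [← integral_const_mul]
      exact setIntegral_mono_on ((aux_int_max hv hβ0).const_mul _) (hintF β hβ0)
        measurableSet_Ioo (fun w hw => (hptw w hw).1)
    have hIhigh : (∫ w in Set.Ioo (0:ℝ) 1, max ((1+β)*w-1) 0 * h w)
        ≤ ((1+ε)*u) * ∫ w in Set.Ioo (0:ℝ) 1, max ((1+β)*w-1) 0 * (1-w)^v := by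
      rw [← integral_const_mul]
      exact setIntegral_mono_on (hintF β hβ0) ((aux_int_max hv hβ0).const_mul _)
        measurableSet_Ioo (fun w hw => (hptw w hw).2)
    rw [aux_I hv hβ0] at hIlow hIhigh
    rw [← hVF β hβ0] at hIlow hIhigh
    set A : ℝ := β^(v+2) / ((1+β)^(v+1) * ((v+1)*(v+2))) with hA
    set Lb : ℝ := u / ((1+β)^(v+1) * ((v+1)*(v+2))) with hLb
    have hBpos : 0 < β^(v+2) := Real.rpow_pos_of_pos hβ0 _
    have hQpos : 0 < (1+β)^(v+1) := Real.rpow_pos_of_pos h1β _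
    have hLbpos : 0 < Lb := hLb_pos β hβ0
    have hAL : u * A / β^(v+2) = Lb := by
      rw [hA, hLb]
      rw [eq_div_iff (by positivity)]
      field_simp
    have hlow' : (1-ε) * Lb ≤ (V (1/β) 1 - 1)/β^(v+2) := by
      rw [← hAL]
      calc (1-ε) * (u * A / β^(v+2)) = ((1-ε)*u*A)/β^(v+2) := by ring
        _ ≤ (V (1/β) 1 - 1)/β^(v+2) := by
            apply div_le_div_of_nonneg_right ?_ hBpos.le |>.trans_eq rfl
            linarith [hIlow]
    have hhigh' : (V (1/β) 1 - 1)/β^(v+2) ≤ (1+ε) * Lb := by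
      rw [← hAL]
      calc (V (1/β) 1 - 1)/β^(v+2) ≤ ((1+ε)*u*A)/β^(v+2) := by
            apply div_le_div_of_nonneg_right ?_ hBpos.le |>.trans_eq rfl
            linarith [hIhigh]
        _ = (1+ε) * (u * A / β^(v+2)) := by ring
    rw [abs_le]
    have hr1 : (1-ε) ≤ ((V (1/β) 1 - 1)/β^(v+2))/Lb := by
      rw [le_div_iff₀ hLbpos]; linarith
    have hr2 : ((V (1/β) 1 - 1)/β^(v+2))/Lb ≤ 1+ε := by
      rw [div_le_iff₀ hLbpos]; linarith
    constructor <;> linarith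
  have hratio : Tendsto (fun β : ℝ =>
      ((V (1/β) 1 - 1)/β^(v+2)) / (u / ((1+β)^(v+1) * ((v+1)*(v+2)))))
      (nhdsWithin 0 (Set.Ioi 0)) (nhds 1) := by
    rw [Metric.tendsto_nhds]
    intro ε hε
    filter_upwards [key (ε/2) (by positivity)] with β hβ
    rw [Real.dist_eq]
    linarith [hβ]
  have hmul := hratio.mul hLb_tendsto
  rw [one_mul] at hmul
  refine Tendsto.congr' ?_ hmul
  filter_upwards [self_mem_nhdsWithin] with β hβ
  exact div_mul_cancel₀ _ (hLb_pos β hβ).ne'
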